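/- Let a₁,…,aₙ ∈ ℕ, let X₁,…,X_k be a k-element sample without replacement from {a₁,…,aₙ}, let A = Σᵢ aᵢ and a_max = maxᵢ aᵢ. Fix δ ∈ (0, 1/4). Then with probability at least 1 − δ over the random sample, |(X₁ + ⋯ + X_k) − (k/n)·A| ≤ √(A · a_max · log(n/δ)). -/

import Mathlib

attribute [local instance] Classical.propDecidable

open Finset Real

set_option maxHeartbeats 1000000 in
lemma bernoulli_mgf_le (p : ℝ) (hp0 : 0 ≤ p) (hp1 : p ≤ 1) {s : ℝ} (hs : 0 ≤ s) :
    1 - p + p * Real.exp s ≤ Real.exp (p * s + s ^ 2 / 8) := by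
  set D : ℝ → ℝ := fun x => 1 - p + p * Real.exp x with hDdef
  have hD : ∀ x, 0 < D x := by
    intro x
    rcases eq_or_lt_of_le hp0 with h | h
    · simp [hDdef, ← h]
    · have : 0 < p * Real.exp x := mul_pos h (Real.exp_pos x)
      have : 0 ≤ 1 - p := by linarith
      simp only [hDdef]; nlinarith [Real.exp_pos x]
  set G : ℝ → ℝ := fun x => p + x / 4 - p * Real.exp x / D x with hGdef
  have hDD : ∀ x, HasDerivAt D (p * Real.exp x) x := by
    intro x
    exact ((Real.hasDerivAt_exp x).const_mul p).const_add (1 - p)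
  have hGD : ∀ x, HasDerivAt G (1 / 4 - (p * Real.exp x * (1 - p)) / (D x) ^ 2) x := by
    intro x
    have h1 : HasDerivAt (fun x : ℝ => p + x / 4) (1 / 4) x := by
      simpa using ((hasDerivAt_id x).div_const 4).const_add p
    have h2 : HasDerivAt (fun x => p * Real.exp x / D x)
        ((p * Real.exp x * D x - p * Real.exp x * (p * Real.exp x)) / (D x) ^ 2) x := by
      exact ((Real.hasDerivAt_exp x).const_mul p).div (hDD x) (ne_of_gt (hD x))
    have := h1.sub h2
    refine this.congr_deriv ?_
    simp only [hDdef]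
    ring_nf
  have hG0 : G 0 = 0 := by
    simp [hGdef, hDdef]
  have hGnonneg : ∀ x, 0 ≤ x → 0 ≤ G x := by
    have hmono : Monotone G := by
      apply monotone_of_deriv_nonneg
      · intro x; exact (hGD x).differentiableAt
      · intro x
        rw [(hGD x).deriv]
        have hq1 : p * Real.exp x ≤ D x := by
          have : 0 ≤ 1 - p := by linarith
          simp only [hDdef]; linarith
        have hq0 : 0 ≤ p * Real.exp x := mul_nonneg hp0 (Real.exp_pos x).le
        set q : ℝ := p * Real.exp x / D x with hqdef
        have hDx := hD x
        have hq : (p * Real.exp x * (1 - p)) / (D x) ^ 2 = q * (1 - q) := by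
          have h1q : 1 - q = (1 - p) / D x := by
            rw [hqdef, eq_div_iff (ne_of_gt hDx), sub_mul, one_mul,
              div_mul_cancel₀ _ (ne_of_gt hDx)]
            simp [hDdef]
          rw [h1q, hqdef, div_mul_div_comm, sq]
        rw [hq]
        nlinarith [sq_nonneg (q - 1/2)]
    intro x hx
    have := hmono hx
    rwa [hG0] at this
  set F : ℝ → ℝ := fun x => p * x + x ^ 2 / 8 - Real.log (D x) with hFdef
  have hFD : ∀ x, HasDerivAt F (G x) x := by
    intro x
    have h1 : HasDerivAt (fun x : ℝ => p * x + x ^ 2 / 8) (p + x / 4) x := by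
      have := ((hasDerivAt_pow 2 x).div_const 8).const_add (p * x)
      have h2 : HasDerivAt (fun y : ℝ => p * y) p x := by
        simpa using (hasDerivAt_id x).const_mul p
      have := h2.add ((hasDerivAt_pow 2 x).div_const 8)
      refine this.congr_deriv ?_
      norm_num
      ring
    have h2 : HasDerivAt (fun x => Real.log (D x)) (p * Real.exp x / D x) x :=
      (hDD x).log (ne_of_gt (hD x))
    exact h1.sub h2
  have hF0 : F 0 = 0 := by simp [hFdef, hDdef]
  have hFmono : MonotoneOn F (Set.Ici 0) := by
    apply monotoneOn_of_deriv_nonneg (convex_Ici 0)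
    · exact (Differentiable.continuous fun x => (hFD x).differentiableAt).continuousOn
    · intro x _; exact (hFD x).differentiableAt.differentiableWithinAt
    · intro x hx
      rw [(hFD x).deriv]
      exact hGnonneg x (le_of_lt (by simpa using hx))
  have hFs : 0 ≤ F s := by
    have := hFmono (Set.self_mem_Ici) (Set.mem_Ici.mpr hs) hs
    rwa [hF0] at this
  have hlog : Real.log (D s) ≤ p * s + s ^ 2 / 8 := by
    simp only [hFdef] at hFs; linarith
  calc D s = Real.exp (Real.log (D s)) := (Real.exp_log (hD s)).symm
    _ ≤ Real.exp (p * s + s ^ 2 / 8) := Real.exp_le_exp.mpr hlog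

-- ℕ version: C(n-m, k-m) * n^m ≤ C(n,k) * k^m
lemma choose_sub_le (n k m : ℕ) (hm : m ≤ k) (hk : k ≤ n) :
    (n - m).choose (k - m) * n ^ m ≤ n.choose k * k ^ m := by
  induction m with
  | zero => simp
  | succ m ih =>
    have hm' : m ≤ k := le_of_lt (Nat.lt_of_succ_le hm)
    have ihm := ih hm'
    have hnm : 0 < n - m := by omega
    -- key identity: (n-m) * C(n-m-1, k-m-1) = (k-m) * C(n-m, k-m)
    have key : (n - m) * (n - (m+1)).choose (k - (m+1)) = (k - m) * (n - m).choose (k - m) := by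
      have h1 : n - (m+1) + 1 = n - m := by omega
      have h2 : k - (m+1) + 1 = k - m := by omega
      have := Nat.add_one_mul_choose_eq (n - (m+1)) (k - (m+1))
      rw [h1, h2] at this
      rw [this, Nat.mul_comm]
    apply Nat.le_of_mul_le_mul_left _ hnm
    calc (n - m) * ((n - (m+1)).choose (k - (m+1)) * n ^ (m+1))
        = ((k - m) * (n - m).choose (k - m)) * (n * n ^ m) := by
          rw [← key]; ring
      _ = ((k - m) * n) * ((n - m).choose (k - m) * n ^ m) := by ring
      _ ≤ ((n - m) * k) * ((n - m).choose (k - m) * n ^ m) := by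
          have : (k - m) * n ≤ (n - m) * k := by
            have h1 : m * k ≤ m * n := Nat.mul_le_mul (le_refl m) hk
            have h4 : k * n = n * k := Nat.mul_comm k n
            rw [Nat.sub_mul, Nat.sub_mul]
            omega
          exact Nat.mul_le_mul this (le_refl _)
      _ ≤ ((n - m) * k) * ((n).choose k * k ^ m) := Nat.mul_le_mul (le_refl _) ihm
      _ = (n - m) * (n.choose k * k ^ (m+1)) := by ring

lemma choose_sub_le_real (n k m : ℕ) (hn : 0 < n) (hk : k ≤ n) (hm : m ≤ k) :
    ((n - m).choose (k - m) : ℝ) ≤ (n.choose k : ℝ) * ((k : ℝ) / n) ^ m := by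
  have h := choose_sub_le n k m hm hk
  have hnpos : (0 : ℝ) < (n : ℝ) ^ m := by positivity
  rw [div_pow, ← mul_div_assoc, le_div_iff₀ hnpos]
  exact_mod_cast h

-- number of k-subsets of univ containing a fixed T of card m
lemma card_supersets {n : ℕ} (k : ℕ) (T : Finset (Fin n)) (hmk : T.card ≤ k) :
    (((Finset.powersetCard k (Finset.univ : Finset (Fin n))).filter
      fun S => T ⊆ S).card) = (n - T.card).choose (k - T.card) := by
  classical
  have : (((Finset.powersetCard k (Finset.univ : Finset (Fin n))).filter
      fun S => T ⊆ S).card) = (Finset.powersetCard (k - T.card) Tᶜ).card := by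
    apply Finset.card_bij' (fun S _ => S \ T) (fun U _ => U ∪ T)
    · intro S hS
      simp only [mem_filter, Finset.mem_powersetCard] at hS
      obtain ⟨⟨_, hcard⟩, hTS⟩ := hS
      rw [Finset.mem_powersetCard]
      constructor
      · intro x hx
        simp only [Finset.mem_compl]
        exact (Finset.mem_sdiff.mp hx).2
      · rw [Finset.card_sdiff_of_subset hTS, hcard]
    · intro U hU
      rw [Finset.mem_powersetCard] at hU
      obtain ⟨hUsub, hUcard⟩ := hU
      have hdisj : Disjoint U T := by
        rw [Finset.disjoint_right]
        intro x hxT hxU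
        have := hUsub hxU
        simp only [Finset.mem_compl] at this
        exact this hxT
      simp only [mem_filter, Finset.mem_powersetCard]
      refine ⟨⟨Finset.subset_univ _, ?_⟩, Finset.subset_union_right⟩
      rw [Finset.card_union_of_disjoint hdisj, hUcard]
      omega
    · intro S hS
      simp only [mem_filter] at hS
      exact Finset.sdiff_union_of_subset hS.2
    · intro U hU
      rw [Finset.mem_powersetCard] at hU
      apply Finset.union_sdiff_cancel_right
      rw [Finset.disjoint_right]
      intro x hxT hxU
      have := hU.1 hxU
      simp only [Finset.mem_compl] at this
      exact this hxT
  rw [this, Finset.card_powersetCard, Finset.card_compl, Fintype.card_fin]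



lemma card_supersets_le_real {n k : ℕ} (hn : 0 < n) (hk : k ≤ n) (T : Finset (Fin n)) :
    ((((Finset.powersetCard k (Finset.univ : Finset (Fin n))).filter
      fun S => T ⊆ S).card) : ℝ) ≤ (n.choose k : ℝ) * ((k : ℝ) / n) ^ T.card := by
  rcases le_or_gt T.card k with h | h
  · rw [card_supersets k T h]
    exact choose_sub_le_real n k T.card hn hk h
  · have : ((Finset.powersetCard k (Finset.univ : Finset (Fin n))).filter
        fun S => T ⊆ S) = ∅ := by
      apply Finset.filter_false_of_mem
      intro S hS hTS
      rw [Finset.mem_powersetCard] at hS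
      have := Finset.card_le_card hTS
      omega
    rw [this]
    simp only [Finset.card_empty, Nat.cast_zero]
    positivity

/-- Negative-association-type inequality for elementary symmetric sums. -/
lemma esymm_le (n k : ℕ) (hn : 0 < n) (hk : k ≤ n) (y : Fin n → ℝ) (hy : ∀ i, 1 ≤ y i) :
    ∑ S ∈ Finset.powersetCard k (Finset.univ : Finset (Fin n)), ∏ i ∈ S, y i ≤
      (n.choose k : ℝ) * ∏ i, (1 - (k : ℝ)/n + ((k : ℝ)/n) * y i) := by
  classical
  set p : ℝ := (k : ℝ) / n with hp
  set z : Fin n → ℝ := fun i => y i - 1 with hz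
  have hz0 : ∀ i, 0 ≤ z i := fun i => by simp [hz]; linarith [hy i]
  set w : Finset (Fin n) → ℝ := fun T => ∏ i ∈ T, z i with hw
  have hw0 : ∀ T, 0 ≤ w T := fun T => Finset.prod_nonneg (fun i _ => hz0 i)
  -- LHS expansion
  have hL : ∑ S ∈ Finset.powersetCard k (Finset.univ : Finset (Fin n)), ∏ i ∈ S, y i
      = ∑ T ∈ (Finset.univ : Finset (Fin n)).powerset,
          ((((Finset.powersetCard k (Finset.univ : Finset (Fin n))).filter
            fun S => T ⊆ S).card) : ℝ) * w T := by
    have hexp : ∀ S : Finset (Fin n), ∏ i ∈ S, y i = ∑ T ∈ S.powerset, w T := by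
      intro S
      have : ∀ i ∈ S, y i = z i + 1 := fun i _ => by simp [hz]
      rw [Finset.prod_congr rfl this, Finset.prod_add]
      simp [hw]
    calc ∑ S ∈ Finset.powersetCard k (Finset.univ : Finset (Fin n)), ∏ i ∈ S, y i
        = ∑ S ∈ Finset.powersetCard k (Finset.univ : Finset (Fin n)),
            ∑ T ∈ (Finset.univ : Finset (Fin n)).powerset,
              (if T ⊆ S then w T else 0) := by
          apply Finset.sum_congr rfl
          intro S hS
          rw [hexp S, ← Finset.sum_filter]
          apply Finset.sum_congr _ (fun _ _ => rfl)
          ext T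
          simp [Finset.mem_powerset]
      _ = ∑ T ∈ (Finset.univ : Finset (Fin n)).powerset,
            ∑ S ∈ Finset.powersetCard k (Finset.univ : Finset (Fin n)),
              (if T ⊆ S then w T else 0) := Finset.sum_comm
      _ = ∑ T ∈ (Finset.univ : Finset (Fin n)).powerset,
          ((((Finset.powersetCard k (Finset.univ : Finset (Fin n))).filter
            fun S => T ⊆ S).card) : ℝ) * w T := by
          apply Finset.sum_congr rfl
          intro T _
          rw [Finset.sum_ite, Finset.sum_const_zero, add_zero, Finset.sum_const,
            nsmul_eq_mul]
  -- RHS expansion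
  have hR : ∏ i, (1 - p + p * y i)
      = ∑ T ∈ (Finset.univ : Finset (Fin n)).powerset, p ^ T.card * w T := by
    have : ∀ i : Fin n, 1 - p + p * y i = p * z i + 1 := by
      intro i; simp [hz]; ring
    rw [Finset.prod_congr rfl (fun i _ => this i), Finset.prod_add]
    apply Finset.sum_congr rfl
    intro T _
    rw [Finset.prod_const_one, mul_one, Finset.prod_mul_distrib, Finset.prod_const]
  rw [hL, hR, Finset.mul_sum]
  apply Finset.sum_le_sum
  intro T _
  calc ((((Finset.powersetCard k (Finset.univ : Finset (Fin n))).filter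
        fun S => T ⊆ S).card) : ℝ) * w T
      ≤ ((n.choose k : ℝ) * p ^ T.card) * w T :=
        mul_le_mul_of_nonneg_right (card_supersets_le_real hn hk T) (hw0 T)
    _ = (n.choose k : ℝ) * (p ^ T.card * w T) := by ring

set_option maxHeartbeats 1000000 in


lemma upper_tail (n j : ℕ) (hn : 0 < n) (hj : j ≤ n) (a : Fin n → ℕ) (δ : ℝ)
    (hδ0 : 0 < δ) (hδ4 : δ < 1/4) (hA : 0 < ∑ i, (a i : ℝ)) :
    (((Finset.powersetCard j (Finset.univ : Finset (Fin n))).filter fun S =>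
        Real.sqrt ((∑ i, (a i : ℝ)) * ((Finset.univ.sup a : ℕ) : ℝ) * Real.log ((n:ℝ)/δ))
          < (∑ i ∈ S, (a i : ℝ)) - ((j : ℝ)/n) * ∑ i, (a i : ℝ)).card : ℝ)
      ≤ (n.choose j : ℝ) * (δ / n)^2 := by
  classical
  set A : ℝ := ∑ i, (a i : ℝ) with hAdef
  set b : ℝ := ((Finset.univ.sup a : ℕ) : ℝ) with hbdef
  set L : ℝ := Real.log ((n:ℝ)/δ) with hLdef
  set t : ℝ := Real.sqrt (A * b * L) with htdef
  have hn1 : (1:ℝ) ≤ n := by exact_mod_cast hn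
  have haib : ∀ i, (a i : ℝ) ≤ b := fun i => by
    exact_mod_cast Nat.cast_le.mpr (Finset.le_sup (Finset.mem_univ i))
  have hb1 : (1:ℝ) ≤ b := by
    by_contra h
    push_neg at h
    have hb0 : Finset.univ.sup a = 0 := by
      by_contra h0
      have : (1:ℝ) ≤ ((Finset.univ.sup a : ℕ) : ℝ) := by
        exact_mod_cast Nat.one_le_iff_ne_zero.mpr h0
      rw [← hbdef] at this; linarith
    have : ∀ i, a i = 0 := fun i =>
      Nat.le_zero.mp (hb0 ▸ Finset.le_sup (Finset.mem_univ i))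
    have : A = 0 := by simp [hAdef, this]
    linarith
  have hL0 : 0 < L := Real.log_pos (by
    rw [lt_div_iff₀ hδ0]; linarith)
  have hAb : 0 < A * b := by positivity
  have ht0 : 0 ≤ t := Real.sqrt_nonneg _
  have ht2 : t ^ 2 = A * b * L := Real.sq_sqrt (by positivity)
  set lam : ℝ := 4 * t / (A * b) with hlamdef
  have hlam0 : 0 ≤ lam := by positivity
  set p : ℝ := (j : ℝ) / n with hpdef
  have hp0 : 0 ≤ p := by positivity
  have hp1 : p ≤ 1 := by
    rw [hpdef, div_le_one (by linarith)]
    exact_mod_cast hj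
  set P := Finset.powersetCard j (Finset.univ : Finset (Fin n)) with hPdef
  set bad := P.filter fun S => t < (∑ i ∈ S, (a i : ℝ)) - p * A with hbaddef
  have key : (bad.card : ℝ) * Real.exp (lam * (p * A + t)) ≤
      (n.choose j : ℝ) * Real.exp (p * (lam * A) + lam ^ 2 * (A * b) / 8) := by
    calc (bad.card : ℝ) * Real.exp (lam * (p * A + t))
        = ∑ _S ∈ bad, Real.exp (lam * (p * A + t)) := by
          rw [Finset.sum_const, nsmul_eq_mul]
      _ ≤ ∑ S ∈ bad, Real.exp (lam * ∑ i ∈ S, (a i : ℝ)) := by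
          apply Finset.sum_le_sum
          intro S hS
          have hSc : t < (∑ i ∈ S, (a i : ℝ)) - p * A := (Finset.mem_filter.mp hS).2
          exact Real.exp_le_exp.mpr (mul_le_mul_of_nonneg_left (by linarith) hlam0)
      _ ≤ ∑ S ∈ P, Real.exp (lam * ∑ i ∈ S, (a i : ℝ)) := by
          apply Finset.sum_le_sum_of_subset_of_nonneg (Finset.filter_subset _ _)
          intro S _ _
          positivity
      _ = ∑ S ∈ P, ∏ i ∈ S, Real.exp (lam * (a i : ℝ)) := by
          apply Finset.sum_congr rfl
          intro S _
          rw [Finset.mul_sum, Real.exp_sum]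
      _ ≤ (n.choose j : ℝ) * ∏ i, (1 - p + p * Real.exp (lam * (a i : ℝ))) := by
          have := esymm_le n j hn hj (fun i => Real.exp (lam * (a i : ℝ)))
            (fun i => Real.one_le_exp (by positivity))
          rw [hPdef, hpdef]
          exact this
      _ ≤ (n.choose j : ℝ) * ∏ i, Real.exp (p * (lam * (a i : ℝ)) + lam ^ 2 * ((a i : ℝ) * b) / 8) := by
          apply mul_le_mul_of_nonneg_left _ (by positivity)
          apply Finset.prod_le_prod
          · intro i _
            have h1 : 0 ≤ 1 - p := by linarith
            positivity
          · intro i _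
            calc 1 - p + p * Real.exp (lam * (a i : ℝ))
                ≤ Real.exp (p * (lam * (a i : ℝ)) + (lam * (a i : ℝ)) ^ 2 / 8) :=
                  bernoulli_mgf_le p hp0 hp1 (by positivity)
              _ ≤ Real.exp (p * (lam * (a i : ℝ)) + lam ^ 2 * ((a i : ℝ) * b) / 8) := by
                  apply Real.exp_le_exp.mpr
                  have : (lam * (a i : ℝ)) ^ 2 ≤ lam ^ 2 * ((a i : ℝ) * b) := by
                    have h1 : (a i : ℝ) * (a i : ℝ) ≤ (a i : ℝ) * b :=
                      mul_le_mul_of_nonneg_left (haib i) (Nat.cast_nonneg _)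
                    have h2 : 0 ≤ lam ^ 2 := sq_nonneg _
                    calc (lam * (a i : ℝ)) ^ 2 = lam ^ 2 * ((a i : ℝ) * (a i : ℝ)) := by ring
                      _ ≤ lam ^ 2 * ((a i : ℝ) * b) := mul_le_mul_of_nonneg_left h1 h2
                  linarith
      _ = (n.choose j : ℝ) * Real.exp (p * (lam * A) + lam ^ 2 * (A * b) / 8) := by
          rw [← Real.exp_sum]
          congr 1
          have : ∀ i : Fin n, p * (lam * (a i : ℝ)) + lam ^ 2 * ((a i : ℝ) * b) / 8
              = (p * lam + lam ^ 2 * b / 8) * (a i : ℝ) := fun i => by ring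
          rw [Finset.sum_congr rfl (fun i _ => this i), ← Finset.mul_sum, ← hAdef]
          ring
  -- rearrange
  have hexp_pos : (0:ℝ) < Real.exp (lam * (p * A + t)) := Real.exp_pos _
  have h2 : (bad.card : ℝ) ≤ (n.choose j : ℝ) *
      Real.exp (p * (lam * A) + lam ^ 2 * (A * b) / 8 - lam * (p * A + t)) := by
    rw [Real.exp_sub, ← mul_div_assoc, le_div_iff₀ hexp_pos]
    exact key
  have harg : p * (lam * A) + lam ^ 2 * (A * b) / 8 - lam * (p * A + t) = -(2 * L) := by
    have hAbne : A * b ≠ 0 := ne_of_gt hAb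
    rw [hlamdef]
    field_simp
    linear_combination (-16 : ℝ) * ht2
  rw [harg] at h2
  have hfin : Real.exp (-(2 * L)) = (δ / n) ^ 2 := by
    have hnd : (0:ℝ) < (n:ℝ)/δ := by positivity
    have h3 : Real.exp L = (n:ℝ)/δ := Real.exp_log hnd
    have : Real.exp (-(2 * L)) = (Real.exp (-L)) ^ 2 := by
      rw [← Real.exp_nat_mul]
      norm_num
    rw [this, Real.exp_neg, h3, inv_div]
  rw [hfin] at h2
  exact h2

set_option maxHeartbeats 1000000 in
/-- Concentration for sampling without replacement: for a uniformly random `k`-element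
subset `S` of `[n]`, with probability at least `1 − δ` the sum `∑_{i∈S} aᵢ` deviates from
its mean `(k/n)·A` by at most `√(A · a_max · log(n/δ))`. Formulated by counting: at least
a `(1 − δ)`-fraction of the `k`-subsets satisfy the deviation bound. -/
theorem sample_without_replacement_concentration (n k : ℕ) (hn : 0 < n) (hk : k ≤ n)
    (a : Fin n → ℕ) (δ : ℝ) (hδ0 : 0 < δ) (hδ4 : δ < 1 / 4) :
    (1 - δ) * ((Finset.powersetCard k (Finset.univ : Finset (Fin n))).card : ℝ) ≤
      (((Finset.powersetCard k (Finset.univ : Finset (Fin n))).filter fun S =>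
          |(∑ i ∈ S, (a i : ℝ)) - ((k : ℝ) / n) * ∑ i, (a i : ℝ)| ≤
            Real.sqrt ((∑ i, (a i : ℝ)) * ((Finset.univ.sup a : ℕ) : ℝ) *
              Real.log ((n : ℝ) / δ))).card : ℝ) := by
  classical
  set A : ℝ := ∑ i, (a i : ℝ) with hAdef
  set t : ℝ := Real.sqrt (A * ((Finset.univ.sup a : ℕ) : ℝ) * Real.log ((n : ℝ) / δ))
    with htdef
  set P := Finset.powersetCard k (Finset.univ : Finset (Fin n)) with hPdef
  set pred : Finset (Fin n) → Prop :=
    fun S => |(∑ i ∈ S, (a i : ℝ)) - ((k : ℝ) / n) * A| ≤ t with hpreddef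
  have hsplit : (P.filter pred).card + (P.filter fun S => ¬ pred S).card = P.card :=
    Finset.card_filter_add_card_filter_not _
  have hA0 : 0 ≤ A := Finset.sum_nonneg fun i _ => Nat.cast_nonneg _
  rcases eq_or_lt_of_le hA0 with hA | hA
  · -- A = 0 : every subset is good
    have hai : ∀ i : Fin n, (a i : ℝ) = 0 := by
      intro i
      have := (Finset.sum_eq_zero_iff_of_nonneg
        (fun i (_ : i ∈ Finset.univ) => Nat.cast_nonneg (a i))).mp hA.symm
      exact this i (Finset.mem_univ i)
    have hall : ∀ S ∈ P, pred S := by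
      intro S _
      have h1 : (∑ i ∈ S, (a i : ℝ)) = 0 :=
        Finset.sum_eq_zero fun i _ => hai i
      have h2 : t = 0 := by
        rw [htdef, ← hA]
        rw [← hA] at hAdef
        simp [← hAdef]
      rw [hpreddef]
      simp only [h1, h2, ← hA]
      simp
    rw [Finset.filter_true_of_mem hall]
    have : (0:ℝ) ≤ δ * P.card := mul_nonneg hδ0.le (Nat.cast_nonneg _)
    nlinarith [Nat.cast_nonneg (α := ℝ) P.card]
  · -- main case
    set up := P.filter (fun S => t < (∑ i ∈ S, (a i : ℝ)) - ((k : ℝ)/n) * A) with hupdef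
    set lo := P.filter (fun S => t < ((k : ℝ)/n) * A - ∑ i ∈ S, (a i : ℝ)) with hlodef
    have hsub : (P.filter fun S => ¬ pred S) ⊆ up ∪ lo := by
      intro S hS
      rw [Finset.mem_filter] at hS
      obtain ⟨hSP, hnp⟩ := hS
      rw [hpreddef] at hnp
      rw [Finset.mem_union, hupdef, hlodef, Finset.mem_filter, Finset.mem_filter]
      rcases lt_or_ge t ((∑ i ∈ S, (a i : ℝ)) - ((k : ℝ)/n) * A) with h | h
      · exact Or.inl ⟨hSP, h⟩
      · refine Or.inr ⟨hSP, ?_⟩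
        by_contra h2
        push_neg at h2
        exact hnp (abs_le.mpr ⟨by linarith, h⟩)
    -- upper tail bound
    have hup : (up.card : ℝ) ≤ (n.choose k : ℝ) * (δ / n)^2 := by
      have := upper_tail n k hn hk a δ hδ0 hδ4 (hAdef ▸ hA)
      rw [hupdef]
      convert this using 4 <;> rw [hAdef, htdef]
    -- lower tail bound via complements
    have hlo : (lo.card : ℝ) ≤ (n.choose k : ℝ) * (δ / n)^2 := by
      have hmap : lo.card ≤
          ((Finset.powersetCard (n - k) (Finset.univ : Finset (Fin n))).filter fun S =>
            t < (∑ i ∈ S, (a i : ℝ)) - (((n - k : ℕ) : ℝ)/n) * A).card := by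
        apply Finset.card_le_card_of_injOn (fun S => Sᶜ)
        · intro S hS
          rw [hlodef, Finset.mem_coe, Finset.mem_filter] at hS
          obtain ⟨hSP, hScond⟩ := hS
          rw [hPdef, Finset.mem_powersetCard_univ] at hSP
          rw [Finset.mem_coe, Finset.mem_filter, Finset.mem_powersetCard_univ]
          constructor
          · rw [Finset.card_compl, Fintype.card_fin, hSP]
          · have hsum : (∑ i ∈ Sᶜ, (a i : ℝ)) = A - ∑ i ∈ S, (a i : ℝ) := by
              rw [hAdef, ← Finset.sum_add_sum_compl S (fun i => (a i : ℝ))]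
              ring
            have hmu : (((n - k : ℕ) : ℝ)/n) * A = A - ((k : ℝ)/n) * A := by
              rw [Nat.cast_sub hk]
              have hn0 : (n : ℝ) ≠ 0 := by positivity
              field_simp
            rw [hsum, hmu]
            linarith
        · intro S _ S' _ h
          have := congrArg (·ᶜ) h
          simpa using this
      have := upper_tail n (n - k) hn (Nat.sub_le n k) a δ hδ0 hδ4 (hAdef ▸ hA)
      rw [Nat.choose_symm hk] at this
      calc (lo.card : ℝ) ≤ _ := Nat.cast_le.mpr hmap
        _ ≤ (n.choose k : ℝ) * (δ / n)^2 := by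
            convert this using 4 <;> rw [hAdef, htdef]
    -- combine
    have hbad : ((P.filter fun S => ¬ pred S).card : ℝ) ≤ 2 * (n.choose k : ℝ) * (δ / n)^2 := by
      have h1 : (P.filter fun S => ¬ pred S).card ≤ up.card + lo.card :=
        le_trans (Finset.card_le_card hsub) (Finset.card_union_le _ _)
      have h2 : ((P.filter fun S => ¬ pred S).card : ℝ) ≤ (up.card : ℝ) + lo.card := by
        exact_mod_cast h1
      linarith
    have hPcard : (P.card : ℝ) = (n.choose k : ℝ) := by
      rw [hPdef, Finset.card_powersetCard, Finset.card_univ, Fintype.card_fin]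
    have hn1 : (1:ℝ) ≤ n := by exact_mod_cast hn
    have hfrac : 2 * (δ / n)^2 ≤ δ := by
      rw [div_pow]
      have hn2 : (1:ℝ) ≤ (n:ℝ)^2 := by nlinarith
      have : δ^2 / (n:ℝ)^2 ≤ δ^2 := by
        apply div_le_self (by positivity) hn2
      nlinarith
    have hgood : ((P.filter pred).card : ℝ) + ((P.filter fun S => ¬ pred S).card : ℝ)
        = (P.card : ℝ) := by exact_mod_cast hsplit
    have hchoose0 : (0:ℝ) ≤ (n.choose k : ℝ) := Nat.cast_nonneg _
    have : ((P.filter fun S => ¬ pred S).card : ℝ) ≤ δ * P.card := by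
      rw [hPcard]
      calc ((P.filter fun S => ¬ pred S).card : ℝ) ≤ 2 * (n.choose k : ℝ) * (δ / n)^2 := hbad
        _ = (n.choose k : ℝ) * (2 * (δ / n)^2) := by ring
        _ ≤ (n.choose k : ℝ) * δ := mul_le_mul_of_nonneg_left hfrac hchoose0
        _ = δ * (n.choose k : ℝ) := by ring
    linarith
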